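/- Let $u \in C^0(\bar{B})$ be positive on the closure of the unit ball $B \subset \mathbb{R}^n$ ($n \ge 3$) and let $a = 2/(n-2)$ (more generally any $a>0$). Then there exists $x \in B$ with $\sigma = (1-|x|)/2 \le 1/2$ such that $2^a u(x) \ge \max_{\bar B_\sigma(x)} u$ and $(2\sigma)^a u(x) \ge u(0)$. -/
import Mathlib


open Metric Real

noncomputable section

/-- Special case of the Schoen selection lemma with weight `φ(r) = (1-r)^a`,
`a = 2/(n-2)` (or any `a > 0`): there is `x` in the open unit ball with
`σ = (1-|x|)/2 ≤ 1/2` such that `2^a u(x) ≥ max_{closedBall x σ} u` and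
`(2σ)^a u(x) ≥ u(0)`. -/
theorem schoen_selection_power
    (n : ℕ) (hn : 3 ≤ n) (a : ℝ) (ha : 0 < a)
    (u : EuclideanSpace ℝ (Fin n) → ℝ)
    (hu_cont : ContinuousOn u (closedBall (0 : EuclideanSpace ℝ (Fin n)) 1))
    (hu_pos : ∀ y ∈ closedBall (0 : EuclideanSpace ℝ (Fin n)) 1, 0 < u y) :
    ∃ x ∈ ball (0 : EuclideanSpace ℝ (Fin n)) 1,
      (1 - ‖x‖) / 2 ≤ 1 / 2 ∧
      (∀ y ∈ closedBall x ((1 - ‖x‖) / 2),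
        u y ≤ (2 : ℝ) ^ a * u x) ∧
      u 0 ≤ (2 * ((1 - ‖x‖) / 2)) ^ a * u x := by
  set B : Set (EuclideanSpace ℝ (Fin n)) := closedBall 0 1 with hB
  set f : EuclideanSpace ℝ (Fin n) → ℝ := fun x => (1 - ‖x‖) ^ a * u x with hf
  have hfc : ContinuousOn f B := by
    apply ContinuousOn.mul _ hu_cont
    apply ContinuousOn.rpow_const
    · exact (continuous_const.sub continuous_norm).continuousOn
    · intro x _; exact Or.inr ha.le
  have hBne : B.Nonempty := ⟨0, by simp [hB]⟩
  obtain ⟨x₀, hx₀B, hmax⟩ := (isCompact_closedBall (0 : EuclideanSpace ℝ (Fin n)) 1).exists_isMaxOn hBne hfc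
  have h0B : (0 : EuclideanSpace ℝ (Fin n)) ∈ B := by simp [hB]
  have hf0 : f 0 = u 0 := by simp [hf]
  have hu0 : 0 < u 0 := hu_pos 0 h0B
  have hfx₀ : 0 < f x₀ := by
    have h : u 0 ≤ f x₀ := hf0 ▸ hmax h0B
    linarith
  have hx₀norm : ‖x₀‖ ≤ 1 := by
    simpa [hB, mem_closedBall, dist_zero_right] using hx₀B
  have hx₀lt : ‖x₀‖ < 1 := by
    rcases lt_or_eq_of_le hx₀norm with h | h
    · exact h
    · exfalso
      have : f x₀ = 0 := by simp [hf, h, Real.zero_rpow ha.ne']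
      linarith
  have hσpos : 0 < (1 - ‖x₀‖) / 2 := by linarith
  set σ : ℝ := (1 - ‖x₀‖) / 2 with hσ
  refine ⟨x₀, by simpa [mem_ball, dist_zero_right] using hx₀lt, ?_, ?_, ?_⟩
  · have : 0 ≤ ‖x₀‖ := norm_nonneg _
    linarith
  · intro y hy
    have hdy : dist y x₀ ≤ σ := by simpa [mem_closedBall] using hy
    have hyn : ‖y‖ ≤ ‖x₀‖ + σ := by
      calc ‖y‖ = ‖x₀ + (y - x₀)‖ := by congr 1; abel
        _ ≤ ‖x₀‖ + ‖y - x₀‖ := norm_add_le _ _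
        _ ≤ ‖x₀‖ + σ := by rw [← dist_eq_norm]; linarith
    have hyB : y ∈ B := by
      show y ∈ closedBall 0 1
      rw [mem_closedBall, dist_zero_right]
      linarith
    have hσ1y : σ ≤ 1 - ‖y‖ := by linarith
    have huy : 0 < u y := hu_pos y hyB
    have h1 : σ ^ a * u y ≤ (1 - ‖y‖) ^ a * u y :=
      mul_le_mul_of_nonneg_right (Real.rpow_le_rpow hσpos.le hσ1y ha.le) huy.le
    have h2 : (1 - ‖y‖) ^ a * u y ≤ (1 - ‖x₀‖) ^ a * u x₀ := hmax hyB
    have h3 : (1 - ‖x₀‖) ^ a * u x₀ = 2 ^ a * σ ^ a * u x₀ := by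
      rw [← Real.mul_rpow (by norm_num) hσpos.le]
      congr 1
      simp only [hσ]; ring_nf
    have hσa : 0 < σ ^ a := Real.rpow_pos_of_pos hσpos a
    have : σ ^ a * u y ≤ σ ^ a * (2 ^ a * u x₀) := by
      calc σ ^ a * u y ≤ 2 ^ a * σ ^ a * u x₀ := by linarith
        _ = σ ^ a * (2 ^ a * u x₀) := by ring
    exact le_of_mul_le_mul_left this hσa
  · have h : u 0 ≤ f x₀ := hf0 ▸ hmax h0B
    have h2σ : 2 * σ = 1 - ‖x₀‖ := by rw [hσ]; ring
    calc u 0 ≤ (1 - ‖x₀‖) ^ a * u x₀ := h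
      _ = (2 * σ) ^ a * u x₀ := by rw [h2σ]
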